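/- For p > 1 and α > 1 - 1/p with α ≠ 1, define Q_α = α^p / (p(α-1)+1). Then Q_α > 1, the map α ↦ Q_α is strictly decreasing on (1-1/p, 1) and strictly increasing on (1, ∞), and Q_α → ∞ both as α → (1-1/p)+ and as α → ∞. Consequently, for every Q > 1 there exist exactly two exponents 1-1/p < α' < 1 < α with Q = Q_α = Q_{α'}. -/

import Mathlib

open Filter Set

theorem stmt_5 (p : ℝ) (hp : 1 < p) :
    (∀ α, 1 - 1/p < α → α ≠ 1 → 1 < α ^ p / (p * (α - 1) + 1)) ∧
    StrictAntiOn (fun α : ℝ => α ^ p / (p * (α - 1) + 1)) (Set.Ioo (1 - 1/p) 1) ∧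
    StrictMonoOn (fun α : ℝ => α ^ p / (p * (α - 1) + 1)) (Set.Ioi 1) ∧
    Tendsto (fun α : ℝ => α ^ p / (p * (α - 1) + 1))
      (nhdsWithin (1 - 1/p) (Set.Ioi (1 - 1/p))) atTop ∧
    Tendsto (fun α : ℝ => α ^ p / (p * (α - 1) + 1)) atTop atTop ∧
    ∀ Q : ℝ, 1 < Q →
      (∃! α' : ℝ, α' ∈ Set.Ioo (1 - 1/p) 1 ∧ Q = α' ^ p / (p * (α' - 1) + 1)) ∧
      (∃! α : ℝ, α ∈ Set.Ioi 1 ∧ Q = α ^ p / (p * (α - 1) + 1)) := by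
  have hp0 : (0:ℝ) < p := by linarith
  have hL0 : (0:ℝ) < 1 - 1/p := by
    have : 1/p < 1 := by rw [div_lt_one hp0]; exact hp
    linarith
  set f : ℝ → ℝ := fun α => α ^ p / (p * (α - 1) + 1) with hf
  -- positivity of denominator
  have hden : ∀ α : ℝ, 1 - 1/p < α → 0 < p * (α - 1) + 1 := by
    intro α hα
    have h1 : p * (1 - 1/p) = p - 1 := by field_simp
    nlinarith [mul_lt_mul_of_pos_left hα hp0]
  have hapos : ∀ α : ℝ, 1 - 1/p < α → 0 < α := fun α hα => lt_trans hL0 hα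
  have hL1 : 1 - 1/p < 1 := by
    have : (0:ℝ) < 1/p := by positivity
    linarith
  -- part 1 : f α > 1
  have part1 : ∀ α, 1 - 1/p < α → α ≠ 1 → 1 < α ^ p / (p * (α - 1) + 1) := by
    intro α hα hne
    rw [lt_div_iff₀ (hden α hα), one_mul]
    have hs : -1 ≤ α - 1 := by linarith [hapos α hα]
    have hs' : α - 1 ≠ 0 := sub_ne_zero.mpr hne
    have := one_add_mul_self_lt_rpow_one_add hs hs' hp
    have h2 : 1 + (α - 1) = α := by ring
    rw [h2] at this
    linarith
  -- derivative
  have hderiv : ∀ α : ℝ, 1 - 1/p < α →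
      HasDerivAt f (p * (p - 1) * α ^ (p - 1) * (α - 1) / (p * (α - 1) + 1) ^ 2) α := by
    intro α hα
    have h0 : α ≠ 0 := (hapos α hα).ne'
    have hnum : HasDerivAt (fun α : ℝ => α ^ p) (p * α ^ (p - 1)) α := by
      simpa using Real.hasDerivAt_rpow_const (Or.inl h0)
    have hd : HasDerivAt (fun α : ℝ => p * (α - 1) + 1) p α := by
      simpa using (((hasDerivAt_id α).sub_const 1).const_mul p).add_const 1
    have := hnum.div hd (hden α hα).ne'
    have hap : α ^ p = α ^ (p - 1) * α := by
      rw [← Real.rpow_add_one h0 (p - 1)]; ring_nf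
    have key : p * (p - 1) * α ^ (p - 1) * (α - 1) / (p * (α - 1) + 1) ^ 2 =
        (p * α ^ (p - 1) * (p * (α - 1) + 1) - α ^ p * p) / (p * (α - 1) + 1) ^ 2 := by
      rw [hap]; ring
    rw [key]; exact this
  -- strict antitone on Ioo
  have cont : ∀ α : ℝ, 1 - 1/p < α → ContinuousAt f α := fun α hα =>
    (hderiv α hα).continuousAt
  have anti : StrictAntiOn f (Set.Ioo (1 - 1/p) 1) := by
    apply strictAntiOn_of_deriv_neg (convex_Ioo _ _)
    · exact fun α hα => (cont α hα.1).continuousWithinAt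
    · intro α hα
      rw [interior_Ioo] at hα
      rw [(hderiv α hα.1).deriv]
      have h1 : 0 < α ^ (p - 1) := Real.rpow_pos_of_pos (hapos α hα.1) _
      have h2 : 0 < (p * (α - 1) + 1) ^ 2 := pow_pos (hden α hα.1) 2
      apply div_neg_of_neg_of_pos _ h2
      have h3 : α - 1 < 0 := by linarith [hα.2]
      have h4 : 0 < p * (p - 1) * α ^ (p - 1) :=
        mul_pos (mul_pos hp0 (by linarith)) h1
      exact mul_neg_of_pos_of_neg h4 h3
  have mono : StrictMonoOn f (Set.Ioi 1) := by
    apply strictMonoOn_of_deriv_pos (convex_Ioi _)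
    · intro α hα
      exact (cont α (lt_trans hL1 hα)).continuousWithinAt
    · intro α hα
      rw [interior_Ioi] at hα
      have hα' : 1 - 1/p < α := lt_trans hL1 hα
      rw [(hderiv α hα').deriv]
      have h1 : 0 < α ^ (p - 1) := Real.rpow_pos_of_pos (hapos α hα') _
      have h2 : 0 < (p * (α - 1) + 1) ^ 2 := pow_pos (hden α hα') 2
      apply div_pos _ h2
      exact mul_pos (mul_pos (mul_pos hp0 (by linarith)) h1) (sub_pos.mpr hα)
  -- tendsto at left endpoint
  have tleft : Tendsto f (nhdsWithin (1 - 1/p) (Set.Ioi (1 - 1/p))) atTop := by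
    have hnum : Tendsto (fun α : ℝ => α ^ p) (nhdsWithin (1 - 1/p) (Set.Ioi (1 - 1/p)))
        (nhds ((1 - 1/p) ^ p)) := by
      apply ContinuousAt.continuousWithinAt
      exact Real.continuousAt_rpow_const _ _ (Or.inl hL0.ne')
    have hcpos : (0:ℝ) < (1 - 1/p) ^ p := Real.rpow_pos_of_pos hL0 _
    have hdlim : Tendsto (fun α : ℝ => p * (α - 1) + 1)
        (nhdsWithin (1 - 1/p) (Set.Ioi (1 - 1/p))) (nhdsWithin 0 (Set.Ioi 0)) := by
      apply tendsto_nhdsWithin_of_tendsto_nhds_of_eventually_within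
      · have hc : Tendsto (fun α : ℝ => p * (α - 1) + 1) (nhds (1 - 1/p))
            (nhds (p * ((1 - 1/p) - 1) + 1)) :=
          Continuous.tendsto (by fun_prop) _
        have h0 : p * ((1 - 1/p) - 1) + 1 = 0 := by field_simp; ring
        rw [h0] at hc
        exact hc.mono_left nhdsWithin_le_nhds
      · filter_upwards [self_mem_nhdsWithin] with α hα
        exact hden α hα
    have hinv : Tendsto (fun α : ℝ => (p * (α - 1) + 1)⁻¹)
        (nhdsWithin (1 - 1/p) (Set.Ioi (1 - 1/p))) atTop :=
      tendsto_inv_nhdsGT_zero.comp hdlim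
    have := hinv.atTop_mul_pos hcpos hnum
    simpa [hf, div_eq_mul_inv, mul_comm] using this
  -- tendsto atTop
  have ttop : Tendsto f atTop atTop := by
    have hbase : Tendsto (fun α : ℝ => α ^ (p - 1) / p) atTop atTop :=
      (tendsto_rpow_atTop (by linarith)).atTop_div_const hp0
    apply tendsto_atTop_mono' _ _ hbase
    filter_upwards [eventually_ge_atTop (1:ℝ)] with α hα
    have h0 : (0:ℝ) < α := by linarith
    have hα' : 1 - 1/p < α := by linarith
    have hd1 : 0 < p * (α - 1) + 1 := hden α hα'
    have hd2 : p * (α - 1) + 1 ≤ p * α := by nlinarith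
    have hap : α ^ p = α ^ (p - 1) * α := by
      rw [← Real.rpow_add_one h0.ne' (p - 1)]; ring_nf
    have hnum0 : 0 ≤ α ^ p := (Real.rpow_pos_of_pos h0 _).le
    calc α ^ (p - 1) / p = α ^ p / (p * α) := by
          rw [hap]; field_simp
      _ ≤ α ^ p / (p * (α - 1) + 1) := by
          apply div_le_div_of_nonneg_left hnum0 hd1 hd2
  -- value at 1
  have hf1 : f 1 = 1 := by simp [hf]
  refine ⟨part1, anti, mono, tleft, ttop, ?_⟩
  intro Q hQ
  constructor
  · -- on Ioo (1 - 1/p) 1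
    have : ∀ᶠ α in nhdsWithin (1 - 1/p) (Set.Ioi (1 - 1/p)), Q < f α :=
      tleft.eventually_gt_atTop Q
    have hne : (nhdsWithin (1 - 1/p) (Set.Ioi (1 - 1/p))).NeBot :=
      nhdsGT_neBot _
    obtain ⟨x, hxQ, hx⟩ := (this.and (eventually_mem_nhdsWithin.and
      (Filter.Tendsto.eventually_lt_const (show (1 - 1/p : ℝ) < 1 by linarith)
        (tendsto_nhdsWithin_of_tendsto_nhds tendsto_id)))).exists
    obtain ⟨hxmem, hx1⟩ := hx
    have hxd : x ∈ Set.Ioo (1 - 1/p) 1 := ⟨hxmem, hx1⟩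
    have hcont : ContinuousOn f (Set.Icc x 1) := by
      intro a ha
      exact (cont a (lt_of_lt_of_le hxmem ha.1)).continuousWithinAt
    have hsub : Set.Ioo (f 1) (f x) ⊆ f '' Set.Ioo x 1 :=
      intermediate_value_Ioo' hx1.le hcont
    have hQmem : Q ∈ Set.Ioo (f 1) (f x) := by rw [hf1]; exact ⟨hQ, hxQ⟩
    obtain ⟨a, ha, hfa⟩ := hsub hQmem
    refine ⟨a, ⟨⟨lt_trans hxmem ha.1, ha.2⟩, hfa.symm⟩, ?_⟩
    intro b hb
    have hbmem := hb.1
    have hamem : a ∈ Set.Ioo (1 - 1/p) 1 := ⟨lt_trans hxmem ha.1, ha.2⟩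
    exact anti.injOn hbmem hamem (by rw [show f b = Q from hb.2.symm, hfa])
  · -- on Ioi 1
    have : ∀ᶠ α in atTop, Q < f α := ttop.eventually_gt_atTop Q
    obtain ⟨b, hbQ, hb1⟩ := (this.and (eventually_gt_atTop (1:ℝ))).exists
    have hcont : ContinuousOn f (Set.Icc 1 b) := by
      intro a ha
      have : 1 - 1/p < a := lt_of_lt_of_le hL1 ha.1
      exact (cont a this).continuousWithinAt
    have hsub : Set.Ioo (f 1) (f b) ⊆ f '' Set.Ioo 1 b :=
      intermediate_value_Ioo hb1.le hcont
    have hQmem : Q ∈ Set.Ioo (f 1) (f b) := by rw [hf1]; exact ⟨hQ, hbQ⟩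
    obtain ⟨a, ha, hfa⟩ := hsub hQmem
    refine ⟨a, ⟨ha.1, hfa.symm⟩, ?_⟩
    intro c hc
    exact mono.injOn hc.1 (Set.mem_Ioi.mpr ha.1)
      (by rw [show f c = Q from hc.2.symm, hfa])
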